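/- Let K, f : ℕ → ℝ be nonnegative with f bounded, K positive and monotonically decreasing, and ‖K‖ := ∑_{t=0}^∞ K(t) < ∞. Suppose there exist ε > 0 and T ∈ ℕ such that ∑_{s=0}^{t} K(s)·K(t−s) ≤ 2(1+ε)‖K‖·K(t) for all t ≥ T, and suppose 2(1+ε)‖K‖ < 1. Then the function P(t) := f(t) + ∑_{j=1}^∞ (K^{*j} * f)(t) is well defined (the series converges for every t), solves the convolution Volterra equation P(t) = f(t) + (K * P)(t) for all t, and satisfies f(t) + (K*f)(t) ≤ P(t) ≤ f(t) + C·(K*f)(t) for all t, where C = (K(0)/K(T) + 1)/(1 − 2‖K‖(1+ε)). -/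

import Mathlib

/-- Discrete convolution of two sequences: `(K * f)(t) = ∑_{s=0}^{t} K s * f (t - s)`. -/
noncomputable def discConv (K f : ℕ → ℝ) (t : ℕ) : ℝ :=
  ∑ s ∈ Finset.range (t + 1), K s * f (t - s)

/-- Convolution powers, shifted by one: `convIter K n = K^{*(n+1)}`, i.e.
`convIter K 0 = K^{*1} = K` and `K^{*(n+2)} = K * K^{*(n+1)}`. -/
noncomputable def convIter (K : ℕ → ℝ) : ℕ → ℕ → ℝ
  | 0 => K
  | n + 1 => discConv K (convIter K n)

lemma discConv_coeff (K f : ℕ → ℝ) (t : ℕ) :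
    discConv K f t = PowerSeries.coeff t (PowerSeries.mk K * PowerSeries.mk f) := by
  rw [PowerSeries.coeff_mul, discConv,
    ← Finset.Nat.sum_antidiagonal_eq_sum_range_succ (fun i j => K i * f j)]
  simp

lemma discConv_assoc (a b c : ℕ → ℝ) :
    discConv (discConv a b) c = discConv a (discConv b c) := by
  funext t
  have h1 : PowerSeries.mk (discConv a b) = PowerSeries.mk a * PowerSeries.mk b :=
    PowerSeries.ext fun n => by rw [PowerSeries.coeff_mk, discConv_coeff]
  have h2 : PowerSeries.mk (discConv b c) = PowerSeries.mk b * PowerSeries.mk c :=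
    PowerSeries.ext fun n => by rw [PowerSeries.coeff_mk, discConv_coeff]
  rw [discConv_coeff, discConv_coeff, h1, h2, mul_assoc]

lemma discConv_nonneg {K f : ℕ → ℝ} (hK : ∀ t, 0 ≤ K t) (hf : ∀ t, 0 ≤ f t) (t : ℕ) :
    0 ≤ discConv K f t :=
  Finset.sum_nonneg fun s _ => mul_nonneg (hK s) (hf _)

lemma convIter_nonneg {K : ℕ → ℝ} (hK : ∀ t, 0 ≤ K t) : ∀ j t, 0 ≤ convIter K j t
  | 0, t => hK t
  | (j+1), t => discConv_nonneg hK (convIter_nonneg hK j) t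

/-- **Non-asymptotic Volterra bound.** Under Kesten's condition and the convergence
threshold `2(1+ε)‖K‖ < 1`, the Neumann series `P = f + ∑_{j=1}^∞ K^{*j} * f` converges
pointwise, solves the convolution Volterra equation `P = f + K * P`, and is trapped between
`f + K*f` and `f + C (K*f)` with `C = (K 0 / K T + 1)/(1 - 2‖K‖(1+ε))`. -/
theorem volterra_nonasymptotic_bound (K f : ℕ → ℝ)
    (hfnonneg : ∀ t, 0 ≤ f t) (hfbdd : ∃ Cf : ℝ, ∀ t, f t ≤ Cf)
    (hKpos : ∀ t, 0 < K t) (hKmono : Antitone K) (hKsum : Summable K)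
    (ε : ℝ) (hε : 0 < ε) (T : ℕ)
    (hkesten : ∀ t, T ≤ t →
      ∑ s ∈ Finset.range (t + 1), K s * K (t - s) ≤ 2 * (1 + ε) * (∑' u, K u) * K t)
    (hnorm : 2 * (1 + ε) * (∑' u, K u) < 1) :
    let P : ℕ → ℝ := fun t => f t + ∑' j : ℕ, discConv (convIter K j) f t
    (∀ t, Summable (fun j : ℕ => discConv (convIter K j) f t)) ∧
    (∀ t, P t = f t + discConv K P t) ∧
    (∀ t, f t + discConv K f t ≤ P t ∧
      P t ≤ f t + (K 0 / K T + 1) / (1 - 2 * (∑' u, K u) * (1 + ε)) * discConv K f t) := by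
  intro P
  have hPdef : ∀ u, P u = f u + ∑' j : ℕ, discConv (convIter K j) f u := fun u => rfl
  have hKnn : ∀ t, 0 ≤ K t := fun t => (hKpos t).le
  set S := ∑' u, K u with hSdef
  set B := K 0 / K T with hBdef
  set a := 2 * (1 + ε) * S with hadef
  have hS1 : K 0 ≤ S := hKsum.le_tsum 0 fun i _ => hKnn i
  have hS0 : 0 < S := lt_of_lt_of_le (hKpos 0) hS1
  have hpart : ∀ t, ∑ s ∈ Finset.range (t + 1), K s ≤ S := fun t =>
    Summable.sum_le_tsum _ (fun i _ => hKnn i) hKsum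
  have ha1 : a < 1 := hnorm
  have ha0 : 0 < a := by rw [hadef]; nlinarith
  have hSa : S ≤ a := by nlinarith
  have hB : 1 ≤ B := (one_le_div (hKpos T)).2 (hKmono (Nat.zero_le T))
  have hkes : ∀ t, T ≤ t → discConv K K t ≤ a * K t := fun t ht => hkesten t ht
  have hK0B : ∀ t, t ≤ T → K 0 ≤ B * K t := by
    intro t ht
    have h1 : K t ≥ K T := hKmono ht
    have h2 : B * K T = K 0 := div_mul_cancel₀ _ (hKpos T).ne'
    nlinarith
  -- step bound
  have hstep : ∀ (g : ℕ → ℝ) (M : ℝ), (∀ u, g u ≤ M * K u) → ∀ t,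
      discConv K g t ≤ M * discConv K K t := by
    intro g M hg t
    calc discConv K g t ≤ ∑ s ∈ Finset.range (t + 1), K s * (M * K (t - s)) :=
          Finset.sum_le_sum fun s _ => mul_le_mul_of_nonneg_left (hg _) (hKnn s)
      _ = M * discConv K K t := by
          rw [discConv, Finset.mul_sum]
          exact Finset.sum_congr rfl fun s _ => by ring
  -- small-t bound
  have hsmall : ∀ (g : ℕ → ℝ) (M : ℝ), 0 ≤ M → (∀ u, u < T → g u ≤ M) → ∀ t, t < T →
      discConv K g t ≤ S * M := by
    intro g M hM hg t ht
    calc discConv K g t ≤ ∑ s ∈ Finset.range (t + 1), K s * M :=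
          Finset.sum_le_sum fun s _ =>
            mul_le_mul_of_nonneg_left (hg _ (lt_of_le_of_lt (Nat.sub_le t s) ht)) (hKnn s)
      _ = (∑ s ∈ Finset.range (t + 1), K s) * M := by rw [Finset.sum_mul]
      _ ≤ S * M := mul_le_mul_of_nonneg_right (hpart t) hM
  have K2small : ∀ t, t < T → discConv K K t ≤ S * K 0 := fun t ht =>
    hsmall K (K 0) (hKnn 0) (fun u _ => hKmono (Nat.zero_le u)) t ht
  -- main claim
  have claim : ∀ j : ℕ, (∀ t, t < T → convIter K (j + 1) t ≤ S * a ^ j * K 0) ∧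
      (∀ t, convIter K (j + 1) t ≤ B * a ^ (j + 1) * K t) := by
    intro j
    induction j with
    | zero =>
      constructor
      · intro t ht
        have h := K2small t ht
        show discConv K K t ≤ S * a ^ 0 * K 0
        simpa using h
      · intro t
        show discConv K K t ≤ B * a ^ 1 * K t
        rcases le_or_gt T t with h | h
        · have h1 := hkes t h
          have h2 := hKpos t
          simp only [pow_one]
          nlinarith [mul_nonneg (mul_nonneg (sub_nonneg.2 hB) ha0.le) h2.le]
        · have h1 := K2small t h
          have h2 := hK0B t h.le
          simp only [pow_one]
          nlinarith [hKnn 0]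
      | succ j ih =>
        obtain ⟨ih1, ih2⟩ := ih
        have hanen : (0:ℝ) ≤ a ^ j := pow_nonneg ha0.le j
        have hMnn : (0:ℝ) ≤ S * a ^ j * K 0 := mul_nonneg (mul_nonneg hS0.le hanen) (hKnn 0)
        have p1 : ∀ t, t < T → convIter K (j + 2) t ≤ S * a ^ (j + 1) * K 0 := by
          intro t ht
          have h := hsmall (convIter K (j + 1)) (S * a ^ j * K 0) hMnn ih1 t ht
          have : convIter K (j + 2) t ≤ S * (S * a ^ j * K 0) := h
          calc convIter K (j + 2) t ≤ S * (S * a ^ j * K 0) := this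
            _ ≤ S * a ^ (j + 1) * K 0 := by
                rw [pow_succ]
                nlinarith [mul_nonneg (sub_nonneg.2 hSa) hMnn]
        refine ⟨p1, ?_⟩
        intro t
        rcases le_or_gt T t with h | h
        · have hstep' := hstep (convIter K (j + 1)) (B * a ^ (j + 1)) ih2 t
          have hMnn' : (0:ℝ) ≤ B * a ^ (j + 1) := by positivity
          calc convIter K (j + 2) t = discConv K (convIter K (j + 1)) t := rfl
            _ ≤ B * a ^ (j + 1) * discConv K K t := hstep'
            _ ≤ B * a ^ (j + 1) * (a * K t) :=
                mul_le_mul_of_nonneg_left (hkes t h) hMnn'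
            _ = B * a ^ (j + 2) * K t := by ring
        · have h1 := p1 t h
          have h2 := hK0B t h.le
          have han1 : (0:ℝ) ≤ a ^ (j + 1) := pow_nonneg ha0.le _
          calc convIter K (j + 2) t ≤ S * a ^ (j + 1) * K 0 := h1
            _ ≤ a ^ (j + 1) * a * (B * K t) := by
                nlinarith [mul_nonneg han1 (mul_nonneg (sub_nonneg.2 hSa)
                    (mul_nonneg (zero_le_one.trans hB) (hKnn t))),
                  mul_nonneg han1 (mul_nonneg hS0.le (sub_nonneg.2 h2))]
            _ = B * a ^ (j + 2) * K t := by ring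
  -- nonnegativity and geometric bound of the terms
  have hg : ∀ (j : ℕ) t, 0 ≤ discConv (convIter K j) f t := fun j t =>
    discConv_nonneg (convIter_nonneg hKnn j) hfnonneg t
  have hcnn : ∀ t, 0 ≤ discConv K f t := discConv_nonneg hKnn hfnonneg
  have hGb : ∀ (j : ℕ) t, discConv (convIter K j) f t ≤ B * a ^ j * discConv K f t := by
    intro j t
    cases j with
    | zero =>
      show discConv K f t ≤ B * a ^ 0 * discConv K f t
      have := hcnn t
      nlinarith
    | succ j =>
      have hb := (claim j).2
      calc discConv (convIter K (j + 1)) f t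
          ≤ ∑ s ∈ Finset.range (t + 1), B * a ^ (j + 1) * K s * f (t - s) :=
            Finset.sum_le_sum fun s _ => mul_le_mul_of_nonneg_right (hb s) (hfnonneg _)
        _ = B * a ^ (j + 1) * discConv K f t := by
            rw [discConv, Finset.mul_sum]
            exact Finset.sum_congr rfl fun s _ => by ring
  have hgeo : Summable (fun j : ℕ => a ^ j) := summable_geometric_of_lt_one ha0.le ha1
  have hsumm : ∀ t, Summable (fun j : ℕ => discConv (convIter K j) f t) := by
    intro t
    exact Summable.of_nonneg_of_le (fun j => hg j t) (fun j => hGb j t)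
      ((hgeo.mul_left B).mul_right _)
  refine ⟨hsumm, ?_, ?_⟩
  · -- Volterra equation
    intro t
    have hshift : ∀ j : ℕ, discConv K (discConv (convIter K j) f) t
        = discConv (convIter K (j + 1)) f t := by
      intro j
      rw [show convIter K (j + 1) = discConv K (convIter K j) from rfl, discConv_assoc]
    have expand : discConv K P t
        = discConv K f t + ∑' j : ℕ, discConv (convIter K (j + 1)) f t := by
      rw [discConv]
      have step1 : ∀ s ∈ Finset.range (t + 1), K s * P (t - s)
          = K s * f (t - s) + ∑' j : ℕ, K s * discConv (convIter K j) f (t - s) := by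
        intro s _
        rw [hPdef, mul_add, tsum_mul_left]
      rw [Finset.sum_congr rfl step1, Finset.sum_add_distrib,
        ← Summable.tsum_finsetSum (fun s _ => (hsumm (t - s)).mul_left (K s))]
      congr 1
      exact tsum_congr fun j => hshift j
    rw [hPdef t, expand, Summable.tsum_eq_zero_add (hsumm t)]
    rfl
  · -- bounds
    intro t
    constructor
    · have h0 : discConv K f t ≤ ∑' j : ℕ, discConv (convIter K j) f t :=
        Summable.le_tsum (hsumm t) 0 fun j _ => hg j t
      rw [hPdef t]
      linarith
    · have hd : (0:ℝ) < 1 - a := by linarith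
      have h1 : ∑' j : ℕ, discConv (convIter K j) f t
          ≤ ∑' j : ℕ, B * a ^ j * discConv K f t :=
        Summable.tsum_le_tsum (fun j => hGb j t) (hsumm t) ((hgeo.mul_left B).mul_right _)
      have h2 : ∑' j : ℕ, B * a ^ j * discConv K f t
          = B * (1 - a)⁻¹ * discConv K f t := by
        rw [tsum_mul_right, tsum_mul_left, tsum_geometric_of_lt_one ha0.le ha1]
      have hda : (1:ℝ) - 2 * S * (1 + ε) = 1 - a := by rw [hadef]; ring
      have h3 : B * (1 - a)⁻¹ * discConv K f t ≤ (B + 1) / (1 - a) * discConv K f t := by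
        rw [div_eq_mul_inv]
        nlinarith [mul_nonneg (inv_pos.2 hd).le (hcnn t)]
      rw [hPdef t, hda]
      linarith [h1, h2.le, h3]
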